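/- The series Σ_{ℓ=0}^{∞} ℓ · 2^{-ℓ}/Q_ℓ converges and equals α/Q_∞, where α := Σ_{k=1}^{∞} 1/(2^k - 1) and Q_∞ = ∏_{k=1}^{∞} (1 - 2^{-k}). -/

import Mathlib

noncomputable def Q (m : ℕ) : ℝ :=
  ∏ k ∈ Finset.range m, (1 - 1 / 2 ^ (k + 1))

open Filter Finset Real

lemma Q_succ (n : ℕ) : Q (n + 1) = Q n * (1 - 1 / 2 ^ (n + 1)) :=
  Finset.prod_range_succ _ n

lemma two_pow_ge (n : ℕ) : (2:ℝ) ≤ 2 ^ (n+1) := by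
  calc (2:ℝ) = 2^1 := by norm_num
  _ ≤ 2^(n+1) := by
    apply pow_le_pow_right₀ (by norm_num) (by omega)

lemma half_le (n : ℕ) : (1:ℝ)/2^(n+1) ≤ 1/2 :=
  one_div_le_one_div_of_le (by norm_num) (two_pow_ge n)

lemma factor_ge (n : ℕ) : (1/2 : ℝ) ≤ 1 - 1 / 2 ^ (n + 1) := by
  have := half_le n; linarith

lemma factor_pos (n : ℕ) : (0:ℝ) < 1 - 1 / 2 ^ (n + 1) :=
  lt_of_lt_of_le (by norm_num) (factor_ge n)

lemma factor_le_one (n : ℕ) : (1:ℝ) - 1 / 2 ^ (n + 1) ≤ 1 := by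
  have : (0:ℝ) ≤ 1/2^(n+1) := by positivity
  linarith

lemma Q_pos (n : ℕ) : 0 < Q n := Finset.prod_pos (fun k _ => factor_pos k)

lemma Q_lb : ∀ n, 1 ≤ n → 1/4 + 1/2^(n+1) ≤ Q n := by
  intro n hn
  induction n, hn using Nat.le_induction with
  | base => simp [Q]; norm_num
  | succ m hm ih =>
    rw [Q_succ]
    set t : ℝ := 1/2^(m+1) with ht
    have ht0 : 0 < t := by positivity
    have ht2 : t ≤ 1/4 := by
      rw [ht]
      apply one_div_le_one_div_of_le (by norm_num)
      calc (4:ℝ) = 2^(1+1) := by norm_num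
      _ ≤ 2^(m+1) := by apply pow_le_pow_right₀ (by norm_num) (by omega)
    have hnext : (1:ℝ)/2^(m+1+1) = t/2 := by rw [ht, pow_succ]; ring
    rw [hnext]
    have h3 : (1/4 + t) * (1 - t) ≤ Q m * (1 - t) := by
      apply mul_le_mul_of_nonneg_right ih (by nlinarith)
    nlinarith [h3, ht0, ht2]

lemma Q_ge (n : ℕ) : (1/4 : ℝ) ≤ Q n := by
  match n with
  | 0 => simp [Q]; norm_num
  | (m+1) =>
    have h : (0:ℝ) < 1/2^(m+1+1) := by positivity
    linarith [Q_lb (m+1) (by omega)]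

lemma Q_le_one (n : ℕ) : Q n ≤ 1 :=
  Finset.prod_le_one (fun k _ => le_of_lt (factor_pos k)) (fun k _ => factor_le_one k)

lemma inv_Q_le (n : ℕ) : 1 / Q n ≤ 4 := by
  rw [div_le_iff₀ (Q_pos n)]
  linarith [Q_ge n]

lemma mult : Multipliable (fun k : ℕ => (1:ℝ) - 1 / 2 ^ (k + 1)) := by
  apply Real.multipliable_of_summable_log (fun k => factor_pos k)
  apply Summable.of_norm_bounded (g := fun k => (1/2:ℝ)^k)
    (summable_geometric_of_lt_one (by norm_num) (by norm_num))
  intro k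
  have h1 := factor_pos k
  have h2 := factor_ge k
  have hlog : Real.log (1 - 1/2^(k+1)) ≤ 0 :=
    Real.log_nonpos (by linarith) (factor_le_one k)
  rw [Real.norm_eq_abs, abs_of_nonpos hlog, ← Real.log_inv]
  have hle : Real.log ((1 - 1/2^(k+1) : ℝ))⁻¹ ≤ ((1 - 1/2^(k+1) : ℝ))⁻¹ - 1 :=
    Real.log_le_sub_one_of_pos (by positivity)
  have hinvle : ((1 - 1/2^(k+1) : ℝ))⁻¹ ≤ 2 := by
    rw [inv_le_comm₀ h1 (by norm_num)]
    linarith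
  have h2k : (1:ℝ)/2^(k+1) ≤ 1/2 * (1/2)^k := by
    rw [div_pow, one_pow, pow_succ]
    ring_nf
    exact le_refl _
  have h3 : (2:ℝ)^(k+1) - 1 ≠ 0 := by have := two_pow_ge k; linarith
  have he : ((1 - 1/2^(k+1) : ℝ))⁻¹ - 1 = (1/2^(k+1)) * ((1 - 1/2^(k+1) : ℝ))⁻¹ := by
    field_simp
    ring
  calc Real.log ((1 - 1/2^(k+1) : ℝ))⁻¹ ≤ ((1 - 1/2^(k+1) : ℝ))⁻¹ - 1 := hle
    _ = (1/2^(k+1)) * ((1 - 1/2^(k+1) : ℝ))⁻¹ := he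
    _ ≤ (1/2 * (1/2)^k) * 2 := by
        apply mul_le_mul h2k hinvle (by positivity) (by positivity)
    _ = (1/2)^k := by ring

lemma term_le {w : ℝ} (hw0 : 0 ≤ w) (hw : w ≤ 1/2) (ℓ : ℕ) :
    w^ℓ / Q ℓ ≤ 4 * (1/2:ℝ)^ℓ := by
  have h1 : w^ℓ ≤ (1/2:ℝ)^ℓ := pow_le_pow_left₀ hw0 hw ℓ
  have h2 : w^ℓ / Q ℓ ≤ w^ℓ * 4 := by
    rw [div_eq_mul_one_div]
    apply mul_le_mul_of_nonneg_left (inv_Q_le ℓ) (by positivity)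
  calc w^ℓ / Q ℓ ≤ w^ℓ * 4 := h2
  _ ≤ (1/2)^ℓ * 4 := by apply mul_le_mul_of_nonneg_right h1 (by norm_num)
  _ = 4 * (1/2)^ℓ := by ring

lemma term_nonneg {w : ℝ} (hw0 : 0 ≤ w) (ℓ : ℕ) : 0 ≤ w^ℓ / Q ℓ :=
  div_nonneg (by positivity) (Q_pos ℓ).le

lemma sumF {w : ℝ} (hw0 : 0 ≤ w) (hw : w ≤ 1/2) : Summable (fun ℓ : ℕ => w^ℓ / Q ℓ) :=
  Summable.of_nonneg_of_le (fun ℓ => term_nonneg hw0 ℓ) (term_le hw0 hw)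
    ((summable_geometric_of_lt_one (by norm_num) (by norm_num)).mul_left 4)

lemma sumS {w : ℝ} (hw0 : 0 ≤ w) (hw : w ≤ 1/2) :
    Summable (fun ℓ : ℕ => (ℓ:ℝ) * w^ℓ / Q ℓ) := by
  have hg : Summable (fun ℓ : ℕ => 4 * ((ℓ:ℝ) * (1/2:ℝ)^ℓ)) := by
    apply Summable.mul_left
    have := summable_pow_mul_geometric_of_norm_lt_one (R := ℝ) 1 (r := 1/2) (by norm_num)
    simpa using this
  apply Summable.of_nonneg_of_le
    (fun ℓ => div_nonneg (by positivity) (Q_pos ℓ).le) _ hg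
  intro ℓ
  have h1 : w^ℓ ≤ (1/2:ℝ)^ℓ := pow_le_pow_left₀ hw0 hw ℓ
  have h2 : (ℓ:ℝ) * w^ℓ / Q ℓ ≤ ((ℓ:ℝ) * w^ℓ) * 4 := by
    rw [div_eq_mul_one_div]
    apply mul_le_mul_of_nonneg_left (inv_Q_le ℓ) (by positivity)
  calc (ℓ:ℝ) * w^ℓ / Q ℓ ≤ ((ℓ:ℝ) * w^ℓ) * 4 := h2
  _ ≤ ((ℓ:ℝ) * (1/2)^ℓ) * 4 := by
      apply mul_le_mul_of_nonneg_right _ (by norm_num)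
      apply mul_le_mul_of_nonneg_left h1 (by positivity)
  _ = 4 * ((ℓ:ℝ) * (1/2)^ℓ) := by ring

noncomputable def F (w : ℝ) : ℝ := ∑' ℓ : ℕ, w^ℓ / Q ℓ
noncomputable def S (w : ℝ) : ℝ := ∑' ℓ : ℕ, (ℓ:ℝ) * w^ℓ / Q ℓ

lemma core (w : ℝ) (ℓ : ℕ) :
    (w/2)^(ℓ+1) / Q (ℓ+1) - w^(ℓ+1) / Q (ℓ+1) = -(w^(ℓ+1) / Q ℓ) := by
  rw [Q_succ]
  have hQ : Q ℓ ≠ 0 := ne_of_gt (Q_pos ℓ)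
  have hf : (1:ℝ) - 1/2^(ℓ+1) ≠ 0 := ne_of_gt (factor_pos ℓ)
  have hpow : (w/2)^(ℓ+1) = w^(ℓ+1) * (1/2^(ℓ+1)) := by
    rw [div_pow]; ring
  rw [hpow, div_sub_div_same]
  have hnum : w^(ℓ+1) * (1/2^(ℓ+1)) - w^(ℓ+1) = -(w^(ℓ+1)) * (1 - 1/2^(ℓ+1)) := by ring
  rw [hnum, mul_comm (Q ℓ) (1 - 1/2^(ℓ+1) : ℝ), mul_comm (-w^(ℓ+1)) (1 - 1/2^(ℓ+1) : ℝ),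
    mul_div_mul_left _ _ hf, neg_div]

lemma FE1 {w : ℝ} (hw0 : 0 ≤ w) (hw : w ≤ 1/2) : F (w/2) = F w - w * F w := by
  have hw2 : 0 ≤ w/2 := by linarith
  have hw2' : w/2 ≤ 1/2 := by linarith
  have hFw : HasSum (fun ℓ : ℕ => w^ℓ / Q ℓ) (F w) := (sumF hw0 hw).hasSum
  have h1 : HasSum (fun ℓ : ℕ => -(w^(ℓ+1) / Q ℓ)) (-(w * F w)) := by
    have h := (hFw.mul_left w).neg
    have he : (fun ℓ : ℕ => -(w * (w^ℓ / Q ℓ))) = fun ℓ => -(w^(ℓ+1) / Q ℓ) :=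
      funext fun ℓ => by ring
    exact he ▸ h
  set f : ℕ → ℝ := fun ℓ => (w/2)^ℓ / Q ℓ - w^ℓ / Q ℓ with hfdef
  have h2 : HasSum (fun ℓ => f (ℓ+1)) (-(w * F w)) := by
    have he : (fun ℓ : ℕ => f (ℓ+1)) = fun ℓ : ℕ => -(w^(ℓ+1) / Q ℓ) :=
      funext fun ℓ => core w ℓ
    rw [he]; exact h1
  have h3 : HasSum f (-(w * F w) + ∑ i ∈ Finset.range 1, f i) :=
    (hasSum_nat_add_iff 1).mp h2
  have hf0 : ∑ i ∈ Finset.range 1, f i = 0 := by simp [hfdef]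
  rw [hf0, add_zero] at h3
  have h4 : HasSum f (F (w/2) - F w) := (sumF hw2 hw2').hasSum.sub hFw
  have := h4.unique h3
  linarith

lemma FE2 {w : ℝ} (hw0 : 0 ≤ w) (hw : w ≤ 1/2) :
    S (w/2) = S w - w * S w - w * F w := by
  have hw2 : 0 ≤ w/2 := by linarith
  have hw2' : w/2 ≤ 1/2 := by linarith
  have hFw : HasSum (fun ℓ : ℕ => w^ℓ / Q ℓ) (F w) := (sumF hw0 hw).hasSum
  have hSw : HasSum (fun ℓ : ℕ => (ℓ:ℝ) * w^ℓ / Q ℓ) (S w) := (sumS hw0 hw).hasSum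
  have h1 : HasSum (fun ℓ : ℕ => -(((ℓ:ℝ)+1) * w^(ℓ+1) / Q ℓ)) (-(w * (S w + F w))) := by
    have h := ((hSw.add hFw).mul_left w).neg
    have he : (fun ℓ : ℕ => -(w * ((ℓ:ℝ) * w^ℓ / Q ℓ + w^ℓ / Q ℓ)))
        = fun ℓ : ℕ => -(((ℓ:ℝ)+1) * w^(ℓ+1) / Q ℓ) :=
      funext fun ℓ => by ring
    exact he ▸ h
  set g : ℕ → ℝ := fun ℓ => (ℓ:ℝ) * (w/2)^ℓ / Q ℓ - (ℓ:ℝ) * w^ℓ / Q ℓ with hgdef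
  have h2 : HasSum (fun ℓ => g (ℓ+1)) (-(w * (S w + F w))) := by
    have he : (fun ℓ : ℕ => g (ℓ+1)) = fun ℓ : ℕ => -(((ℓ:ℝ)+1) * w^(ℓ+1) / Q ℓ) := by
      funext ℓ
      have hc := core w ℓ
      show (↑(ℓ+1):ℝ) * (w/2)^(ℓ+1) / Q (ℓ+1) - (↑(ℓ+1):ℝ) * w^(ℓ+1) / Q (ℓ+1)
          = -(((ℓ:ℝ)+1) * w^(ℓ+1) / Q ℓ)
      push_cast
      have : ((ℓ:ℝ)+1) * (w/2)^(ℓ+1) / Q (ℓ+1) - ((ℓ:ℝ)+1) * w^(ℓ+1) / Q (ℓ+1)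
          = ((ℓ:ℝ)+1) * ((w/2)^(ℓ+1) / Q (ℓ+1) - w^(ℓ+1) / Q (ℓ+1)) := by ring
      rw [this, hc]
      ring
    rw [he]; exact h1
  have h3 : HasSum g (-(w * (S w + F w)) + ∑ i ∈ Finset.range 1, g i) :=
    (hasSum_nat_add_iff 1).mp h2
  have hg0 : ∑ i ∈ Finset.range 1, g i = 0 := by simp [hgdef]
  rw [hg0, add_zero] at h3
  have h4 : HasSum g (S (w/2) - S w) := (sumS hw2 hw2').hasSum.sub hSw
  have := h4.unique h3
  linarith

lemma Q_zero : Q 0 = 1 := by simp [Q]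

noncomputable def Qinf : ℝ := ∏' k : ℕ, ((1:ℝ) - 1 / 2 ^ (k + 1))

lemma tendsto_Q : Filter.Tendsto Q Filter.atTop (nhds Qinf) :=
  mult.hasProd.tendsto_prod_nat

lemma Qinf_ge : (1/4 : ℝ) ≤ Qinf :=
  ge_of_tendsto tendsto_Q (Filter.Eventually.of_forall Q_ge)

lemma Qinf_pos : (0:ℝ) < Qinf := lt_of_lt_of_le (by norm_num) Qinf_ge

noncomputable def wseq (n : ℕ) : ℝ := 1 / 2 ^ (n + 1)

lemma wseq_nonneg (n : ℕ) : 0 ≤ wseq n := by unfold wseq; positivity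
lemma wseq_le (n : ℕ) : wseq n ≤ 1/2 := half_le n
lemma wseq_half (n : ℕ) : wseq n / 2 = wseq (n + 1) := by
  unfold wseq; rw [pow_succ]; ring

lemma tendsto_wseq : Filter.Tendsto wseq Filter.atTop (nhds 0) := by
  have h : Filter.Tendsto (fun n : ℕ => (1/2:ℝ)^(n+1)) Filter.atTop (nhds 0) :=
    (tendsto_pow_atTop_nhds_zero_of_lt_one (by norm_num) (by norm_num)).comp
      (Filter.tendsto_add_atTop_nat 1)
  have he : (fun n : ℕ => (1/2:ℝ)^(n+1)) = wseq := by
    funext n; unfold wseq; rw [div_pow, one_pow]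
  exact he ▸ h

lemma F_near_one {w : ℝ} (hw0 : 0 ≤ w) (hw : w ≤ 1/2) : |F w - 1| ≤ 8 * w := by
  have hsum := sumF hw0 hw
  have htail : Summable (fun ℓ : ℕ => w^(ℓ+1) / Q (ℓ+1)) :=
    (summable_nat_add_iff (f := fun ℓ : ℕ => w^ℓ / Q ℓ) 1).mpr hsum
  have hF : F w = w^0/Q 0 + ∑' ℓ : ℕ, w^(ℓ+1) / Q (ℓ+1) := by
    unfold F
    exact hsum.tsum_eq_zero_add
  rw [Q_zero, pow_zero] at hF
  have hb : ∀ ℓ : ℕ, w^(ℓ+1)/Q (ℓ+1) ≤ (4*w) * (1/2:ℝ)^ℓ := by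
    intro ℓ
    have h1 : w^(ℓ+1)/Q (ℓ+1) ≤ w^(ℓ+1) * 4 := by
      rw [div_eq_mul_one_div]
      apply mul_le_mul_of_nonneg_left (inv_Q_le (ℓ+1)) (by positivity)
    have h2 : w^(ℓ+1) ≤ w * (1/2:ℝ)^ℓ := by
      rw [pow_succ']
      apply mul_le_mul_of_nonneg_left (pow_le_pow_left₀ hw0 hw ℓ) hw0
    calc w^(ℓ+1)/Q (ℓ+1) ≤ w^(ℓ+1) * 4 := h1
    _ ≤ (w * (1/2)^ℓ) * 4 := by apply mul_le_mul_of_nonneg_right h2 (by norm_num)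
    _ = (4*w) * (1/2)^ℓ := by ring
  have hge : 0 ≤ ∑' ℓ : ℕ, w^(ℓ+1) / Q (ℓ+1) :=
    tsum_nonneg (fun ℓ => term_nonneg hw0 (ℓ+1) |>.trans_eq rfl)
  have hle : ∑' ℓ : ℕ, w^(ℓ+1) / Q (ℓ+1) ≤ ∑' ℓ : ℕ, (4*w) * (1/2:ℝ)^ℓ := by
    apply Summable.tsum_le_tsum hb htail
    exact (summable_geometric_of_lt_one (by norm_num) (by norm_num)).mul_left _
  have hval : ∑' ℓ : ℕ, (4*w) * (1/2:ℝ)^ℓ = 8 * w := by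
    rw [tsum_mul_left, tsum_geometric_of_lt_one (by norm_num) (by norm_num)]
    norm_num
    ring
  rw [hF]
  rw [hval] at hle
  rw [abs_le]
  constructor <;> [linarith; linarith]

noncomputable def Kc : ℝ := ∑' ℓ : ℕ, (ℓ:ℝ) * (1/2:ℝ)^ℓ

lemma sumK : Summable (fun ℓ : ℕ => (ℓ:ℝ) * (1/2:ℝ)^ℓ) := by
  have := summable_pow_mul_geometric_of_norm_lt_one (R := ℝ) 1 (r := 1/2) (by norm_num)
  simpa using this

lemma S_bounds {w : ℝ} (hw0 : 0 ≤ w) (hw : w ≤ 1/2) :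
    0 ≤ S w ∧ S w ≤ (8 * Kc) * w := by
  have hsum := sumS hw0 hw
  constructor
  · exact tsum_nonneg (fun ℓ => div_nonneg (by positivity) (Q_pos ℓ).le)
  · have hb : ∀ ℓ : ℕ, (ℓ:ℝ) * w^ℓ / Q ℓ ≤ (8*w) * ((ℓ:ℝ) * (1/2:ℝ)^ℓ) := by
      intro ℓ
      have h1 : (ℓ:ℝ) * w^ℓ / Q ℓ ≤ ((ℓ:ℝ) * w^ℓ) * 4 := by
        rw [div_eq_mul_one_div]
        apply mul_le_mul_of_nonneg_left (inv_Q_le ℓ) (by positivity)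
      have h2 : w^ℓ ≤ 2 * w * (1/2:ℝ)^ℓ ∨ ℓ = 0 := by
        match ℓ with
        | 0 => exact Or.inr rfl
        | (m+1) =>
          left
          have : w^(m+1) ≤ w * (1/2:ℝ)^m := by
            rw [pow_succ']
            apply mul_le_mul_of_nonneg_left (pow_le_pow_left₀ hw0 hw m) hw0
          calc w^(m+1) ≤ w * (1/2:ℝ)^m := this
          _ = 2 * w * (1/2)^(m+1) := by rw [pow_succ]; ring
      rcases h2 with h2 | h2
      · calc (ℓ:ℝ) * w^ℓ / Q ℓ ≤ ((ℓ:ℝ) * w^ℓ) * 4 := h1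
        _ ≤ ((ℓ:ℝ) * (2 * w * (1/2:ℝ)^ℓ)) * 4 := by
            apply mul_le_mul_of_nonneg_right _ (by norm_num)
            apply mul_le_mul_of_nonneg_left h2 (by positivity)
        _ = (8*w) * ((ℓ:ℝ) * (1/2:ℝ)^ℓ) := by ring
      · subst h2; simp
    have hle := Summable.tsum_le_tsum hb hsum (sumK.mul_left (8*w))
    rw [tsum_mul_left] at hle
    calc S w ≤ (8*w) * Kc := hle
    _ = (8 * Kc) * w := by ring

lemma tendsto_F : Filter.Tendsto (fun n => F (wseq n)) Filter.atTop (nhds 1) := by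
  have h0 : Filter.Tendsto (fun n => F (wseq n) - 1) Filter.atTop (nhds 0) := by
    apply squeeze_zero_norm (fun n => F_near_one (wseq_nonneg n) (wseq_le n))
    have := tendsto_wseq.const_mul (8:ℝ)
    simpa using this
  have := h0.add_const 1
  simpa using this

lemma tendsto_S : Filter.Tendsto (fun n => S (wseq n)) Filter.atTop (nhds 0) := by
  apply squeeze_zero (fun n => (S_bounds (wseq_nonneg n) (wseq_le n)).1)
    (fun n => (S_bounds (wseq_nonneg n) (wseq_le n)).2)
  have := tendsto_wseq.const_mul (8*Kc)
  simpa using this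

lemma wfac (n : ℕ) : (1:ℝ) - wseq n = 1 - 1/2^(n+1) := rfl

noncomputable def e (n : ℕ) : ℝ := F (wseq n) * Qinf / Q n

lemma estep (n : ℕ) : e (n+1) = e n := by
  unfold e
  have hF : F (wseq (n+1)) = (1 - wseq n) * F (wseq n) := by
    rw [← wseq_half n, FE1 (wseq_nonneg n) (wseq_le n)]
    ring
  have hQ : Q (n+1) = Q n * (1 - wseq n) := Q_succ n
  rw [hF, hQ]
  have h1 : (1:ℝ) - wseq n ≠ 0 := ne_of_gt (factor_pos n)
  have h2 : Q n ≠ 0 := ne_of_gt (Q_pos n)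
  field_simp

lemma e_const (n : ℕ) : e n = e 0 := by
  induction n with
  | zero => rfl
  | succ m ih => rw [estep m, ih]

lemma tendsto_e : Filter.Tendsto e Filter.atTop (nhds 1) := by
  have h : Filter.Tendsto e Filter.atTop (nhds (1 * Qinf / Qinf)) :=
    (tendsto_F.mul_const Qinf).div tendsto_Q (ne_of_gt Qinf_pos)
  rwa [one_mul, div_self (ne_of_gt Qinf_pos)] at h

lemma e_one (n : ℕ) : e n = 1 := by
  have hconst : Filter.Tendsto e Filter.atTop (nhds (e 0)) := by
    have : e = fun _ => e 0 := funext e_const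
    rw [this]
    exact tendsto_const_nhds
  rw [e_const n, tendsto_nhds_unique hconst tendsto_e]

lemma FQ (n : ℕ) : F (wseq n) * Qinf = Q n := by
  have h := e_one n
  unfold e at h
  rwa [div_eq_one_iff_eq (ne_of_gt (Q_pos n))] at h

noncomputable def x (n : ℕ) : ℝ := S (wseq n) * Qinf / Q n

lemma xstep (n : ℕ) : x n - x (n+1) = 1 / (2^(n+1) - 1) := by
  unfold x
  have hS : S (wseq (n+1)) = (1 - wseq n) * S (wseq n) - wseq n * F (wseq n) := by
    rw [← wseq_half n, FE2 (wseq_nonneg n) (wseq_le n)]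
    ring
  have hQ : Q (n+1) = Q n * (1 - wseq n) := Q_succ n
  rw [hS, hQ]
  have h1 : (1:ℝ) - wseq n ≠ 0 := ne_of_gt (factor_pos n)
  have h2 : Q n ≠ 0 := ne_of_gt (Q_pos n)
  have h3 : (2:ℝ)^(n+1) - 1 ≠ 0 := by
    have := two_pow_ge n; intro h; rw [sub_eq_zero] at h; linarith
  have h4 : (2:ℝ)^(n+1) ≠ 0 := by positivity
  have hFval : F (wseq n) = Q n / Qinf := (eq_div_iff (ne_of_gt Qinf_pos)).mpr (FQ n)
  rw [hFval]
  have hQinf : Qinf ≠ 0 := ne_of_gt Qinf_pos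
  simp only [wseq] at *
  field_simp
  ring

lemma tendsto_x : Filter.Tendsto x Filter.atTop (nhds 0) := by
  have h : Filter.Tendsto x Filter.atTop (nhds (0 * Qinf / Qinf)) :=
    (tendsto_S.mul_const Qinf).div tendsto_Q (ne_of_gt Qinf_pos)
  rwa [zero_mul, zero_div] at h

lemma sum_alpha : Summable (fun k : ℕ => (1:ℝ) / (2 ^ (k + 1) - 1)) := by
  apply Summable.of_nonneg_of_le (g := fun k : ℕ => (1:ℝ)/(2^(k+1)-1))
    (f := fun k : ℕ => (1/2:ℝ)^k)
  · intro k
    have := two_pow_ge k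
    have h3 : (0:ℝ) < 2^(k+1) - 1 := by linarith
    exact le_of_lt (div_pos one_pos h3)
  · intro k
    have h1 : (0:ℝ) < 2^k := by positivity
    have h2 : (2:ℝ)^k ≤ 2^(k+1) - 1 := by
      rw [pow_succ]
      nlinarith [one_le_pow₀ (a := (2:ℝ)) (n := k) (by norm_num)]
    calc (1:ℝ)/(2^(k+1)-1) ≤ 1/2^k := one_div_le_one_div_of_le h1 h2
    _ = (1/2)^k := by rw [div_pow, one_pow]
  · exact summable_geometric_of_lt_one (by norm_num) (by norm_num)

lemma alpha_hasSum : HasSum (fun k : ℕ => (1:ℝ) / (2 ^ (k + 1) - 1)) (x 0) := by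
  rw [sum_alpha.hasSum_iff_tendsto_nat]
  have he : ∀ N : ℕ, ∑ i ∈ Finset.range N, (1:ℝ)/(2^(i+1)-1)
      = x 0 - x N := by
    intro N
    rw [← Finset.sum_range_sub' x N]
    apply Finset.sum_congr rfl
    intro i _
    exact (xstep i).symm
  have h : Filter.Tendsto (fun N => x 0 - x N) Filter.atTop (nhds (x 0 - 0)) :=
    tendsto_const_nhds.sub tendsto_x
  rw [sub_zero] at h
  exact Filter.Tendsto.congr (fun N => (he N).symm) h

/-- The series `Σ_{ℓ≥0} ℓ·2^{-ℓ}/Q_ℓ` converges and equals `α/Q_∞`,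
where `α = Σ_{k=1}^{∞} 1/(2^k - 1)` and `Q_∞ = ∏_{k=1}^{∞} (1 - 2^{-k})`. -/
theorem euler_series_alpha :
    Multipliable (fun k : ℕ => (1 : ℝ) - 1 / 2 ^ (k + 1)) ∧
    Summable (fun k : ℕ => (1 : ℝ) / (2 ^ (k + 1) - 1)) ∧
    HasSum (fun l : ℕ => (l : ℝ) * (1 / 2 ^ l) / Q l)
      ((∑' k : ℕ, (1 : ℝ) / (2 ^ (k + 1) - 1)) /
        ∏' k : ℕ, ((1 : ℝ) - 1 / 2 ^ (k + 1))) := by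
  refine ⟨mult, sum_alpha, ?_⟩
  have hval : (∑' k : ℕ, (1:ℝ) / (2^(k+1) - 1)) = x 0 := alpha_hasSum.tsum_eq
  have hprod : (∏' k : ℕ, ((1:ℝ) - 1/2^(k+1))) = Qinf := rfl
  rw [hval, hprod]
  have hx0 : x 0 = S (1/2) * Qinf := by
    unfold x
    rw [Q_zero, div_one]
    norm_num [wseq]
  have hgoalval : x 0 / Qinf = S (1/2) := by
    rw [hx0, mul_div_assoc, div_self (ne_of_gt Qinf_pos), mul_one]
  rw [hgoalval]
  have h := (sumS (w := 1/2) (by norm_num) (le_refl _)).hasSum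
  have he : (fun ℓ : ℕ => (ℓ:ℝ) * (1/2:ℝ)^ℓ / Q ℓ)
      = fun l : ℕ => (l:ℝ) * (1 / 2^l) / Q l := by
    funext l
    rw [div_pow, one_pow]
  exact he ▸ h
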